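/- From the one-step recursion and quadratic growth, RCD converges linearly: if d(y) − d* ≥ (σ/2)dist(y,Y*)² on the sublevel set {d(y) ≤ d(y⁰)}, then E[d(y^k) − d*] ≤ (1 − σ/(m(σ+1)))^k (d(y⁰) − d* + ½dist(y⁰,Y*)²). -/

import Mathlib

set_option maxHeartbeats 1000000

open Metric Set

lemma rcd_aux_limit {S R C : ℝ} (h : ∀ t : ℝ, 0 < t → t ≤ 1 → S - t * C ≤ R) : S ≤ R := by
  have hten : Filter.Tendsto (fun k : ℕ => S - (1 / (k + 1 : ℝ)) * C) Filter.atTop (nhds S) := by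
    have h0 : Filter.Tendsto (fun k : ℕ => (1 / (k + 1 : ℝ))) Filter.atTop (nhds 0) :=
      tendsto_one_div_add_atTop_nhds_zero_nat
    have := (h0.mul_const C).const_sub S
    simpa using this
  refine le_of_tendsto' hten fun k => ?_
  refine h _ (by positivity) ?_
  rw [div_le_one (by positivity)]
  linarith [Nat.cast_nonneg (α := ℝ) k]

lemma rcd_aux_slope {F : Type*} [NormedAddCommGroup F] [NormedSpace ℝ F] {f : F → ℝ}
    (hf : ConvexOn ℝ Set.univ f) (y h : F) {t : ℝ} (ht : 0 < t) :
    f y - f (y - t • h) ≤ t * (f (y + h) - f y) := by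
  have ht' : (0:ℝ) < 1 + t := by linarith
  have h1 : (0:ℝ) ≤ 1 / (1 + t) := by positivity
  have h2 : (0:ℝ) ≤ t / (1 + t) := by positivity
  have h3 : 1 / (1 + t) + t / (1 + t) = 1 := by field_simp
  have key := hf.2 (Set.mem_univ (y - t • h)) (Set.mem_univ (y + h)) h1 h2 h3
  have hpt : (1 / (1 + t)) • (y - t • h) + (t / (1 + t)) • (y + h) = y := by
    have hne : (1 + t) ≠ 0 := ne_of_gt ht'
    match_scalars <;> field_simp <;> ring
  rw [hpt] at key
  have e : (1/(1+t)) • f (y - t • h) + (t/(1+t)) • f (y + h)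
      = (f (y - t • h) + t * f (y + h))/(1+t) := by
    simp only [smul_eq_mul]; field_simp
  rw [e, le_div_iff₀ ht'] at key
  nlinarith [key]

lemma rcd_descent {F : Type*} [NormedAddCommGroup F] [InnerProductSpace ℝ F] [CompleteSpace F]
    {f : F → ℝ} {g : F → F} (hg : ∀ x, HasGradientAt f (g x) x)
    (hL : ∀ x y, ‖g x - g y‖ ≤ ‖x - y‖) (a b : F) :
    f b ≤ f a + (inner ℝ (g a) (b - a) : ℝ) + 1 / 2 * ‖b - a‖ ^ 2 := by
  set c : ℝ := inner ℝ (g a) (b - a) with hc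
  set K : ℝ := ‖b - a‖ ^ 2 with hK
  have hline : ∀ s : ℝ, HasDerivAt (fun s : ℝ => a + s • (b - a)) (b - a) s := by
    intro s
    simpa using ((hasDerivAt_id s).smul_const (b - a)).const_add a
  have hφ : ∀ s : ℝ, HasDerivAt (fun s : ℝ => f (a + s • (b - a)))
      (inner ℝ (g (a + s • (b - a))) (b - a) : ℝ) s := by
    intro s
    have h1 := ((hg (a + s • (b - a))).hasFDerivAt).comp_hasDerivAt s (hline s)
    exact h1
  set ψ : ℝ → ℝ := fun s => f (a + s • (b - a)) - s * c - s ^ 2 * (K / 2) with hψdef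
  have hψ : ∀ s : ℝ, HasDerivAt ψ
      ((inner ℝ (g (a + s • (b - a))) (b - a) : ℝ) - c - s * K) s := by
    intro s
    have h2 : HasDerivAt (fun s : ℝ => s * c) c s := hasDerivAt_mul_const c
    have h3 : HasDerivAt (fun s : ℝ => s ^ 2 * (K / 2)) ((2 * s ^ 1) * (K / 2)) s :=
      (hasDerivAt_pow 2 s).mul_const (K / 2)
    have := ((hφ s).sub h2).sub h3
    rw [show s * K = 2 * s ^ 1 * (K / 2) by ring]
    exact this
  have hanti : AntitoneOn ψ (Icc 0 1) := by
    apply antitoneOn_of_deriv_nonpos (convex_Icc 0 1)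
    · exact fun s _ => (hψ s).continuousAt.continuousWithinAt
    · intro s _
      exact (hψ s).differentiableAt.differentiableWithinAt
    · intro s hs
      rw [interior_Icc] at hs
      rw [(hψ s).deriv]
      have hb1 : (inner ℝ (g (a + s • (b - a)) - g a) (b - a) : ℝ)
          ≤ ‖g (a + s • (b - a)) - g a‖ * ‖b - a‖ := real_inner_le_norm _ _
      have hb2 : ‖g (a + s • (b - a)) - g a‖ ≤ ‖(a + s • (b - a)) - a‖ := hL _ _
      have hb3 : ‖(a + s • (b - a)) - a‖ = s * ‖b - a‖ := by
        rw [add_sub_cancel_left, norm_smul, Real.norm_eq_abs, abs_of_pos hs.1]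
      rw [inner_sub_left, ← hc] at hb1
      have hbn : (0:ℝ) ≤ ‖b - a‖ := norm_nonneg _
      have hb4 := mul_le_mul_of_nonneg_right hb2 hbn
      rw [hb3] at hb4
      have hb5 : s * ‖b - a‖ * ‖b - a‖ = s * K := by rw [hK]; ring
      linarith [hb1, hb4, hb5]
  have h01 : ψ 1 ≤ ψ 0 := hanti (by constructor <;> norm_num) (by constructor <;> norm_num)
    zero_le_one
  have e0 : ψ 0 = f a := by simp [hψdef]
  have e1 : ψ 1 = f b - c - K / 2 := by simp [hψdef]
  rw [e0, e1] at h01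
  linarith

lemma rcd_supp_convex {E : Type*} [NormedAddCommGroup E] [InnerProductSpace ℝ E]
    {X : Set E} (hne : X.Nonempty) {s : E → ℝ}
    (hs : ∀ z, s z = sSup ((fun t => (inner ℝ t z : ℝ)) '' X))
    (hb : ∀ z, BddAbove ((fun t => (inner ℝ t z : ℝ)) '' X)) :
    ConvexOn ℝ Set.univ s := by
  refine ⟨convex_univ, ?_⟩
  intro z1 _ z2 _ a b ha hb' hab
  rw [hs, hs, hs]
  refine csSup_le (hne.image _) ?_
  rintro r ⟨t, ht, rfl⟩
  dsimp only
  have he : (inner ℝ t (a • z1 + b • z2) : ℝ) = a * inner ℝ t z1 + b * inner ℝ t z2 := by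
    rw [inner_add_right, real_inner_smul_right, real_inner_smul_right]
  rw [he]
  simp only [smul_eq_mul]
  have h1 : (inner ℝ t z1 : ℝ) ≤ sSup ((fun t => (inner ℝ t z1 : ℝ)) '' X) :=
    le_csSup (hb z1) (Set.mem_image_of_mem _ ht)
  have h2 : (inner ℝ t z2 : ℝ) ≤ sSup ((fun t => (inner ℝ t z2 : ℝ)) '' X) :=
    le_csSup (hb z2) (Set.mem_image_of_mem _ ht)
  exact add_le_add (mul_le_mul_of_nonneg_left h1 ha) (mul_le_mul_of_nonneg_left h2 hb')

lemma rcd_prox_strong {E : Type*} [NormedAddCommGroup E] [InnerProductSpace ℝ E]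
    {s : E → ℝ} (hconv : ConvexOn ℝ Set.univ s) (a q : E)
    (hq : ∀ z, 1 / 2 * ‖q - a‖ ^ 2 + s q ≤ 1 / 2 * ‖z - a‖ ^ 2 + s z) (c : E) :
    1 / 2 * ‖q - a‖ ^ 2 + s q + 1 / 2 * ‖c - q‖ ^ 2 ≤ 1 / 2 * ‖c - a‖ ^ 2 + s c := by
  set I : ℝ := inner ℝ (q - a) (c - q) with hI
  set N : ℝ := ‖c - q‖ ^ 2 with hN
  have hnorm2 : ‖c - a‖ ^ 2 = ‖q - a‖ ^ 2 + 2 * I + N := by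
    have e : c - a = (q - a) + (c - q) := by abel
    rw [e, norm_add_sq_real]
  refine rcd_aux_limit (C := 1 / 2 * N) fun t ht ht1 => ?_
  have hzt : (1 - t) • q + t • c = q + t • (c - q) := by module
  have hconvt := hconv.2 (Set.mem_univ q) (Set.mem_univ c)
    (show (0:ℝ) ≤ 1 - t by linarith) (le_of_lt ht) (show (1 - t) + t = 1 by ring)
  rw [hzt] at hconvt
  simp only [smul_eq_mul] at hconvt
  have hmin' := hq (q + t • (c - q))
  have hnorm1 : ‖q + t • (c - q) - a‖ ^ 2 = ‖q - a‖ ^ 2 + 2 * t * I + t ^ 2 * N := by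
    have e : q + t • (c - q) - a = (q - a) + t • (c - q) := by abel
    rw [e, norm_add_sq_real, real_inner_smul_right, norm_smul, Real.norm_eq_abs,
      abs_of_pos ht, mul_pow]
    ring
  have hkey : t * s q ≤ t * (I + t * (N / 2) + s c) := by nlinarith [hmin', hconvt, hnorm1]
  have hdiv : s q ≤ I + t * (N / 2) + s c := le_of_mul_le_mul_left hkey ht
  nlinarith [hdiv, hnorm2]

noncomputable def rcdUpd {n m : ℕ} (y : PiLp 2 (fun _ : Fin m => EuclideanSpace ℝ (Fin n)))
    (i : Fin m) (c : EuclideanSpace ℝ (Fin n)) :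
    PiLp 2 (fun _ : Fin m => EuclideanSpace ℝ (Fin n)) :=
  WithLp.toLp 2 (Function.update (WithLp.ofLp y) i c)

theorem rcd_linear_convergence
    (n m : ℕ) (hm : 0 < m)
    (X : Fin m → Set (EuclideanSpace ℝ (Fin n)))
    (hXne : ∀ i, (X i).Nonempty) (hXclosed : ∀ i, IsClosed (X i))
    (hXconv : ∀ i, Convex ℝ (X i))
    (supp : Fin m → EuclideanSpace ℝ (Fin n) → ℝ)
    (hsupp : ∀ i z, supp i z = sSup ((fun t => (inner ℝ t z : ℝ)) '' X i))
    (hbdd : ∀ i z, BddAbove ((fun t => (inner ℝ t z : ℝ)) '' X i))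
    (dtil : PiLp 2 (fun _ : Fin m => EuclideanSpace ℝ (Fin n)) → ℝ)
    (hconv : ConvexOn ℝ Set.univ dtil)
    (G : PiLp 2 (fun _ : Fin m => EuclideanSpace ℝ (Fin n)) → Fin m → EuclideanSpace ℝ (Fin n))
    (hgrad : ∀ y i,
      HasGradientAt (fun t : EuclideanSpace ℝ (Fin n) => dtil (WithLp.toLp 2 (Function.update y i t))) (G (WithLp.toLp 2 y) i) (y i))
    (hlip : ∀ y i t, ‖G (WithLp.toLp 2 (Function.update y i t)) i - G (WithLp.toLp 2 y) i‖ ≤ ‖t - y i‖)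
    (d : PiLp 2 (fun _ : Fin m => EuclideanSpace ℝ (Fin n)) → ℝ)
    (hd : ∀ y, d y = dtil y + ∑ i, supp i (y i))
    (Ystar : Set (PiLp 2 (fun _ : Fin m => EuclideanSpace ℝ (Fin n))))
    (hYne : Ystar.Nonempty) (hYclosed : IsClosed Ystar) (hYconv : Convex ℝ Ystar)
    (dstar : ℝ)
    (hopt : ∀ z ∈ Ystar, d z = dstar)
    (hmin : ∀ y, dstar ≤ d y)
    (y0 : PiLp 2 (fun _ : Fin m => EuclideanSpace ℝ (Fin n)))
    (σ : ℝ) (hσ : 0 < σ)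
    (hQG : ∀ y, d y ≤ d y0 → d y - dstar ≥ σ / 2 * (infDist y Ystar)^2)
    (p : PiLp 2 (fun _ : Fin m => EuclideanSpace ℝ (Fin n)) → Fin m → EuclideanSpace ℝ (Fin n))
    (hp : ∀ y i z, (1 / 2) * ‖p y i - (y i - G y i)‖^2 + supp i (p y i)
        ≤ (1 / 2) * ‖z - (y i - G y i)‖^2 + supp i z)
    (Y : ∀ k : ℕ, (Fin k → Fin m) → PiLp 2 (fun _ : Fin m => EuclideanSpace ℝ (Fin n)))
    (hY0 : ∀ ω, Y 0 ω = y0)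
    (hYstep : ∀ k (ω : Fin (k + 1) → Fin m),
      Y (k + 1) ω
        = WithLp.toLp 2 (Function.update (WithLp.ofLp (Y k (fun j => ω j.castSucc))) (ω (Fin.last k))
            (p (Y k (fun j => ω j.castSucc)) (ω (Fin.last k))))) :
    ∀ k : ℕ,
      (∑ ω : Fin k → Fin m, (d (Y k ω) - dstar)) / (m : ℝ)^k
        ≤ (1 - σ / (m * (σ + 1)))^k
            * (d y0 - dstar + (1 / 2) * (infDist y0 Ystar)^2) := by
  classical
  have hmR : (0:ℝ) < m := by exact_mod_cast hm
  have hmR1 : (1:ℝ) ≤ m := by exact_mod_cast hm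
  have hm0 : (m:ℝ) ≠ 0 := ne_of_gt hmR
  -- block gradient at every point
  have hgrad' : ∀ (y : PiLp 2 (fun _ : Fin m => EuclideanSpace ℝ (Fin n))) (i : Fin m)
      (t : EuclideanSpace ℝ (Fin n)),
      HasGradientAt (fun s => dtil (rcdUpd y i s)) (G (rcdUpd y i t) i) t := by
    intro y i t
    have h1 := hgrad (Function.update y i t) i
    have e : (fun s => dtil (WithLp.toLp 2 (Function.update (Function.update y i t) i s)))
        = fun s => dtil (rcdUpd y i s) := by
      funext s; rw [Function.update_idem]; rfl
    rw [e] at h1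
    simpa [Function.update_self, rcdUpd] using h1
  -- block Lipschitz
  have hlip' : ∀ (y : PiLp 2 (fun _ : Fin m => EuclideanSpace ℝ (Fin n))) (i : Fin m) t t',
      ‖G (rcdUpd y i t) i - G (rcdUpd y i t') i‖ ≤ ‖t - t'‖ := by
    intro y i t t'
    have h1 := hlip (Function.update y i t') i t
    rw [Function.update_idem] at h1
    simpa [Function.update_self, rcdUpd] using h1
  -- block descent lemma
  have hbd : ∀ (y : PiLp 2 (fun _ : Fin m => EuclideanSpace ℝ (Fin n))) (i : Fin m)
      (c : EuclideanSpace ℝ (Fin n)),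
      dtil (rcdUpd y i c)
        ≤ dtil y + (inner ℝ (G y i) (c - y i) : ℝ) + 1 / 2 * ‖c - y i‖ ^ 2 := by
    intro y i c
    have h := rcd_descent (f := fun s => dtil (rcdUpd y i s))
      (g := fun t => G (rcdUpd y i t) i) (hgrad' y i) (hlip' y i) (y i) c
    simpa [rcdUpd, Function.update_eq_self] using h
  -- supp convexity
  have hsc : ∀ i, ConvexOn ℝ Set.univ (supp i) :=
    fun i => rcd_supp_convex (hXne i) (hsupp i) (hbdd i)
  -- full gradient inequality from block gradients
  have hgi : ∀ (y z : PiLp 2 (fun _ : Fin m => EuclideanSpace ℝ (Fin n))),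
      dtil y + ∑ i, (inner ℝ (G y i) (z i - y i) : ℝ) ≤ dtil z := by
    intro y z
    set S : ℝ := ∑ i, (inner ℝ (G y i) (z i - y i) : ℝ) with hS
    set C : ℝ := (m:ℝ) / 2 * ∑ i, ‖z i - y i‖ ^ 2 with hC
    have hCnn : (0:ℝ) ≤ ∑ i, ‖z i - y i‖ ^ 2 :=
      Finset.sum_nonneg fun i _ => sq_nonneg _
    have key : ∀ t : ℝ, 0 < t → t ≤ 1 → (dtil y + S) - t * C ≤ dtil z := by
      intro t ht ht1
      have htm : (0:ℝ) < t * m := by positivity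
      set u : Fin m → PiLp 2 (fun _ : Fin m => EuclideanSpace ℝ (Fin n)) :=
        fun i => rcdUpd y i (y i - (t * m) • (z i - y i)) with hu
      have hw1 : ∑ i : Fin m, ((m:ℝ)⁻¹) • u i = y - t • (z - y) := by
        ext j : 1
        rw [WithLp.ofLp_sum, Finset.sum_apply j Finset.univ (fun i => (((m:ℝ)⁻¹) • u i).ofLp)]
        have e : ∀ i : Fin m, (((m:ℝ)⁻¹) • u i) j
            = (m:ℝ)⁻¹ • y j + (if i = j then (-t) • (z j - y j) else 0) := by
          intro i
          rcases eq_or_ne i j with rfl | hne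
          · have h1 : u i i = y i - (t * (m:ℝ)) • (z i - y i) := by
              simp [hu, rcdUpd]
            rw [PiLp.smul_apply, h1, smul_sub, smul_smul, if_pos rfl]
            rw [show (m:ℝ)⁻¹ * (t * (m:ℝ)) = t by field_simp]
            rw [neg_smul]
            abel
          · have h1 : u i j = y j := by
              simp [hu, rcdUpd, Function.update_of_ne hne.symm]
            rw [PiLp.smul_apply, h1, if_neg hne, add_zero]
        rw [Finset.sum_congr rfl fun i _ => e i, Finset.sum_add_distrib, Finset.sum_const,
          Finset.card_univ, Fintype.card_fin, Finset.sum_ite_eq' Finset.univ j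
            (fun _ => (-t) • (z j - y j)), if_pos (Finset.mem_univ j)]
        rw [PiLp.sub_apply, PiLp.smul_apply, PiLp.sub_apply]
        rw [← Nat.cast_smul_eq_nsmul ℝ, smul_smul, mul_inv_cancel₀ hm0, one_smul, neg_smul]
        abel
      have hJ := hconv.map_sum_le (t := Finset.univ) (w := fun _ : Fin m => (m:ℝ)⁻¹)
        (p := u) (fun i _ => by positivity)
        (by rw [Finset.sum_const, Finset.card_univ, Fintype.card_fin, nsmul_eq_mul]
            field_simp)
        (fun i _ => Set.mem_univ _)
      rw [hw1] at hJ
      have hub : ∀ i : Fin m, dtil (u i)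
          ≤ dtil y - (t * m) * (inner ℝ (G y i) (z i - y i) : ℝ)
            + (t * m) ^ 2 / 2 * ‖z i - y i‖ ^ 2 := by
        intro i
        have h1 := hbd y i (y i - (t * m) • (z i - y i))
        have e1 : (y i - (t * (m:ℝ)) • (z i - y i)) - y i = -((t * (m:ℝ)) • (z i - y i)) := by
          abel
        rw [e1, inner_neg_right, real_inner_smul_right, norm_neg, norm_smul,
          Real.norm_eq_abs, abs_of_pos htm] at h1
        have h2 : dtil (u i) ≤ dtil y + -(t * ↑m * inner ℝ (G y i) (z i - y i))
            + 1 / 2 * (t * ↑m * ‖z i - y i‖) ^ 2 := by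
          rw [hu]; exact h1
        nlinarith [h2]
      have hsum2 : ∑ i : Fin m, ((m:ℝ)⁻¹) • dtil (u i) ≤ dtil y - t * S + t ^ 2 * C := by
        have hper : ∀ i : Fin m, ((m:ℝ)⁻¹) • dtil (u i)
            ≤ (m:ℝ)⁻¹ * dtil y - t * (inner ℝ (G y i) (z i - y i) : ℝ)
              + t ^ 2 * ((m:ℝ) / 2) * ‖z i - y i‖ ^ 2 := by
          intro i
          rw [smul_eq_mul]
          have h3 := mul_le_mul_of_nonneg_left (hub i) (inv_nonneg.mpr hmR.le)
          calc (m:ℝ)⁻¹ * dtil (u i)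
              ≤ (m:ℝ)⁻¹ * (dtil y - (t * m) * (inner ℝ (G y i) (z i - y i) : ℝ)
                + (t * m) ^ 2 / 2 * ‖z i - y i‖ ^ 2) := h3
            _ = (m:ℝ)⁻¹ * dtil y - t * (inner ℝ (G y i) (z i - y i) : ℝ)
                + t ^ 2 * ((m:ℝ) / 2) * ‖z i - y i‖ ^ 2 := by
                field_simp
        calc ∑ i : Fin m, ((m:ℝ)⁻¹) • dtil (u i)
            ≤ ∑ i : Fin m, ((m:ℝ)⁻¹ * dtil y - t * (inner ℝ (G y i) (z i - y i) : ℝ)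
              + t ^ 2 * ((m:ℝ) / 2) * ‖z i - y i‖ ^ 2) :=
              Finset.sum_le_sum fun i _ => hper i
          _ = dtil y - t * S + t ^ 2 * C := by
              rw [Finset.sum_add_distrib, Finset.sum_sub_distrib, Finset.sum_const,
                Finset.card_univ, Fintype.card_fin, ← Finset.mul_sum, ← Finset.mul_sum,
                nsmul_eq_mul, hS, hC]
              field_simp
      have hJ2 : dtil (y - t • (z - y)) ≤ dtil y - t * S + t ^ 2 * C := le_trans hJ hsum2
      have hslope := rcd_aux_slope hconv y (z - y) ht
      rw [show y + (z - y) = z by abel] at hslope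
      have hcomb : t * (S - t * C) ≤ t * (dtil z - dtil y) := by nlinarith [hJ2, hslope]
      have hfin := le_of_mul_le_mul_left hcomb ht
      linarith
    exact rcd_aux_limit key
  -- sum of supp over an update
  have hsum_supp : ∀ (y : PiLp 2 (fun _ : Fin m => EuclideanSpace ℝ (Fin n))) (i : Fin m)
      (q : EuclideanSpace ℝ (Fin n)),
      ∑ j, supp j (rcdUpd y i q j)
        = (∑ j, supp j (y j)) + supp i q - supp i (y i) := by
    intro y i q
    have e : ∀ j : Fin m, supp j (rcdUpd y i q j)
        = supp j (y j) + (if j = i then supp i q - supp i (y i) else 0) := by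
      intro j
      rcases eq_or_ne j i with rfl | hne
      · simp [rcdUpd]
      · simp [rcdUpd, Function.update_of_ne hne, hne]
    rw [Finset.sum_congr rfl fun j _ => e j, Finset.sum_add_distrib,
      Finset.sum_ite_eq' Finset.univ i (fun _ => supp i q - supp i (y i)),
      if_pos (Finset.mem_univ i)]
    ring
  -- norm squared of update difference
  have hupd_normsq : ∀ (y w : PiLp 2 (fun _ : Fin m => EuclideanSpace ℝ (Fin n))) (i : Fin m)
      (q : EuclideanSpace ℝ (Fin n)),
      ‖rcdUpd y i q - w‖ ^ 2 = ‖y - w‖ ^ 2 - ‖y i - w i‖ ^ 2 + ‖q - w i‖ ^ 2 := by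
    intro y w i q
    rw [PiLp.norm_sq_eq_of_L2, PiLp.norm_sq_eq_of_L2]
    simp only [PiLp.sub_apply]
    have e : ∀ j : Fin m, ‖rcdUpd y i q j - w j‖ ^ 2
        = ‖y j - w j‖ ^ 2 + (if j = i then ‖q - w i‖ ^ 2 - ‖y i - w i‖ ^ 2 else 0) := by
      intro j
      rcases eq_or_ne j i with rfl | hne
      · simp [rcdUpd]
      · simp [rcdUpd, Function.update_of_ne hne, hne]
    rw [Finset.sum_congr rfl fun j _ => e j, Finset.sum_add_distrib,
      Finset.sum_ite_eq' Finset.univ i (fun _ => ‖q - w i‖ ^ 2 - ‖y i - w i‖ ^ 2),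
      if_pos (Finset.mem_univ i)]
    ring
  -- master per-coordinate inequality
  have hmaster : ∀ (y : PiLp 2 (fun _ : Fin m => EuclideanSpace ℝ (Fin n))) (i : Fin m)
      (c : EuclideanSpace ℝ (Fin n)),
      d (rcdUpd y i (p y i))
        ≤ d y + (inner ℝ (G y i) (c - y i) : ℝ) + 1 / 2 * ‖c - y i‖ ^ 2 + supp i c
          - supp i (y i) - 1 / 2 * ‖c - p y i‖ ^ 2 := by
    intro y i c
    have h1 := hbd y i (p y i)
    have h2 := rcd_prox_strong (hsc i) (y i - G y i) (p y i) (fun z => hp y i z) c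
    have e1 : ‖p y i - (y i - G y i)‖ ^ 2
        = ‖p y i - y i‖ ^ 2 + 2 * (inner ℝ (p y i - y i) (G y i) : ℝ) + ‖G y i‖ ^ 2 := by
      rw [show p y i - (y i - G y i) = (p y i - y i) + G y i by abel, norm_add_sq_real]
    have e2 : ‖c - (y i - G y i)‖ ^ 2
        = ‖c - y i‖ ^ 2 + 2 * (inner ℝ (c - y i) (G y i) : ℝ) + ‖G y i‖ ^ 2 := by
      rw [show c - (y i - G y i) = (c - y i) + G y i by abel, norm_add_sq_real]
    have e3 : (inner ℝ (p y i - y i) (G y i) : ℝ) = (inner ℝ (G y i) (p y i - y i) : ℝ) :=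
      real_inner_comm _ _
    have e4 : (inner ℝ (c - y i) (G y i) : ℝ) = (inner ℝ (G y i) (c - y i) : ℝ) :=
      real_inner_comm _ _
    have hD1 : d (rcdUpd y i (p y i)) = dtil (rcdUpd y i (p y i))
        + ((∑ j, supp j (y j)) + supp i (p y i) - supp i (y i)) := by
      rw [hd, hsum_supp]
    have hDy : d y = dtil y + ∑ j, supp j (y j) := hd y
    rw [hD1, hDy]
    linarith [h1, h2, e1, e2, e3, e4]
  -- monotonicity
  have hmono : ∀ (y : PiLp 2 (fun _ : Fin m => EuclideanSpace ℝ (Fin n))) (i : Fin m),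
      d (rcdUpd y i (p y i)) ≤ d y := by
    intro y i
    have h := hmaster y i (y i)
    simp only [sub_self, inner_zero_right, norm_zero] at h
    nlinarith [h, sq_nonneg ‖y i - p y i‖]
  -- one-step expected decrease
  have hσ1 : (0:ℝ) < σ + 1 := by linarith
  have hstep : ∀ (y : PiLp 2 (fun _ : Fin m => EuclideanSpace ℝ (Fin n))), d y ≤ d y0 →
      ∑ i : Fin m, (d (rcdUpd y i (p y i)) - dstar
          + 1 / 2 * (infDist (rcdUpd y i (p y i)) Ystar) ^ 2)
        ≤ ((m:ℝ) - σ / (σ + 1)) * (d y - dstar + 1 / 2 * (infDist y Ystar) ^ 2) := by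
    intro y hy
    obtain ⟨w, hwY, hwd⟩ := hYclosed.exists_infDist_eq_dist hYne y
    set δ : ℝ := infDist y Ystar with hδdef
    have hynorm : ‖y - w‖ = δ := by rw [← dist_eq_norm, ← hwd]
    have hQ := hQG y hy
    rw [← hδdef] at hQ
    have hD0 : 0 ≤ d y - dstar := by linarith [hmin y]
    have hper : ∀ i : Fin m,
        d (rcdUpd y i (p y i)) - dstar + 1 / 2 * (infDist (rcdUpd y i (p y i)) Ystar) ^ 2
          ≤ (d y - dstar + 1 / 2 * δ ^ 2) + (inner ℝ (G y i) (w i - y i) : ℝ)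
            + supp i (w i) - supp i (y i) := by
      intro i
      have h1 := hmaster y i (w i)
      have h2 : (infDist (rcdUpd y i (p y i)) Ystar) ^ 2
          ≤ ‖y - w‖ ^ 2 - ‖y i - w i‖ ^ 2 + ‖p y i - w i‖ ^ 2 := by
        have ha : infDist (rcdUpd y i (p y i)) Ystar ≤ dist (rcdUpd y i (p y i)) w :=
          infDist_le_dist_of_mem hwY
        have hb : (infDist (rcdUpd y i (p y i)) Ystar) ^ 2
            ≤ (dist (rcdUpd y i (p y i)) w) ^ 2 :=
          pow_le_pow_left₀ infDist_nonneg ha 2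
        rw [dist_eq_norm, hupd_normsq y w i (p y i)] at hb
        exact hb
      rw [hynorm] at h2
      have e3 : ‖w i - y i‖ ^ 2 = ‖y i - w i‖ ^ 2 := by rw [norm_sub_rev]
      have e4 : ‖w i - p y i‖ ^ 2 = ‖p y i - w i‖ ^ 2 := by rw [norm_sub_rev]
      linarith [h1, h2, e3, e4]
    have hsum1 := Finset.sum_le_sum fun i (_ : i ∈ Finset.univ) => hper i
    have hrhs : ∑ i : Fin m, ((d y - dstar + 1 / 2 * δ ^ 2) + (inner ℝ (G y i) (w i - y i) : ℝ)
          + supp i (w i) - supp i (y i))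
        = (m:ℝ) * (d y - dstar + 1 / 2 * δ ^ 2)
          + (∑ i, (inner ℝ (G y i) (w i - y i) : ℝ))
          + (∑ i, supp i (w i)) - ∑ i, supp i (y i) := by
      rw [Finset.sum_sub_distrib, Finset.sum_add_distrib, Finset.sum_add_distrib,
        Finset.sum_const, Finset.card_univ, Fintype.card_fin, nsmul_eq_mul]
    have hgi' := hgi y w
    have hw_d : dtil w + ∑ i, supp i (w i) = dstar := by rw [← hd]; exact hopt w hwY
    have hy_d : d y = dtil y + ∑ i, supp i (y i) := hd y
    have hkey : σ / (σ + 1) * (d y - dstar + 1 / 2 * δ ^ 2) ≤ d y - dstar := by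
      rw [div_mul_eq_mul_div, div_le_iff₀ hσ1]
      nlinarith [hQ]
    calc ∑ i : Fin m, (d (rcdUpd y i (p y i)) - dstar
          + 1 / 2 * (infDist (rcdUpd y i (p y i)) Ystar) ^ 2)
        ≤ ∑ i : Fin m, ((d y - dstar + 1 / 2 * δ ^ 2) + (inner ℝ (G y i) (w i - y i) : ℝ)
          + supp i (w i) - supp i (y i)) := hsum1
      _ ≤ ((m:ℝ) - σ / (σ + 1)) * (d y - dstar + 1 / 2 * δ ^ 2) := by
          rw [hrhs]
          nlinarith [hgi', hkey]
  -- main induction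
  have hV0 : 0 ≤ d y0 - dstar + 1 / 2 * (infDist y0 Ystar) ^ 2 := by
    have h1 := hmin y0
    have h2 := sq_nonneg (infDist y0 Ystar)
    linarith
  have hfac : (0:ℝ) ≤ (m:ℝ) - σ / (σ + 1) := by
    have h1 : σ / (σ + 1) < 1 := by
      rw [div_lt_one hσ1]; linarith
    linarith
  have key : ∀ k : ℕ, (∀ ω : Fin k → Fin m, d (Y k ω) ≤ d y0) ∧
      (∑ ω : Fin k → Fin m, (d (Y k ω) - dstar + 1 / 2 * (infDist (Y k ω) Ystar) ^ 2))
        ≤ ((m:ℝ) - σ / (σ + 1)) ^ k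
          * (d y0 - dstar + 1 / 2 * (infDist y0 Ystar) ^ 2) := by
    intro k
    induction k with
    | zero =>
      constructor
      · intro ω; rw [hY0]
      · have hcard : (Finset.univ : Finset (Fin 0 → Fin m)).card = 1 := by simp
        rw [Finset.sum_congr rfl fun ω _ => by rw [hY0 ω]]
        rw [Finset.sum_const, hcard, pow_zero, one_mul, one_smul]
    | succ k ih =>
      obtain ⟨ihmono, ihsum⟩ := ih
      have hstep' : ∀ ω : Fin (k + 1) → Fin m,
          Y (k + 1) ω = rcdUpd (Y k (fun j => ω j.castSucc)) (ω (Fin.last k))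
            (p (Y k (fun j => ω j.castSucc)) (ω (Fin.last k))) := fun ω => hYstep k ω
      have hsnoc : ∀ (ω' : Fin k → Fin m) (i : Fin m),
          Y (k + 1) (Fin.snoc ω' i) = rcdUpd (Y k ω') i (p (Y k ω') i) := by
        intro ω' i
        rw [hstep' (Fin.snoc ω' i)]
        have e1 : (fun j : Fin k => (Fin.snoc ω' i : Fin (k+1) → Fin m) j.castSucc) = ω' := by
          funext j; simp
        rw [e1]
        simp
      constructor
      · intro ω
        rw [hstep' ω]
        exact le_trans (hmono _ _) (ihmono _)
      · have hre : ∑ ω : Fin (k+1) → Fin m,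
            (d (Y (k+1) ω) - dstar + 1 / 2 * (infDist (Y (k+1) ω) Ystar) ^ 2)
            = ∑ x : Fin m × (Fin k → Fin m),
              (d (Y (k+1) (Fin.snoc x.2 x.1)) - dstar
                + 1 / 2 * (infDist (Y (k+1) (Fin.snoc x.2 x.1)) Ystar) ^ 2) := by
          refine (Fintype.sum_equiv (Fin.snocEquiv (fun _ => Fin m)) _ _ ?_).symm
          intro x
          rfl
        rw [hre, Fintype.sum_prod_type_right]
        calc ∑ ω' : Fin k → Fin m, ∑ i : Fin m,
              (d (Y (k+1) (Fin.snoc ω' i)) - dstar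
                + 1 / 2 * (infDist (Y (k+1) (Fin.snoc ω' i)) Ystar) ^ 2)
            ≤ ∑ ω' : Fin k → Fin m, ((m:ℝ) - σ / (σ + 1))
                * (d (Y k ω') - dstar + 1 / 2 * (infDist (Y k ω') Ystar) ^ 2) := by
              refine Finset.sum_le_sum fun ω' _ => ?_
              have h1 := hstep (Y k ω') (ihmono ω')
              calc ∑ i : Fin m, (d (Y (k+1) (Fin.snoc ω' i)) - dstar
                    + 1 / 2 * (infDist (Y (k+1) (Fin.snoc ω' i)) Ystar) ^ 2)
                  = ∑ i : Fin m, (d (rcdUpd (Y k ω') i (p (Y k ω') i)) - dstar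
                    + 1 / 2 * (infDist (rcdUpd (Y k ω') i (p (Y k ω') i)) Ystar) ^ 2) := by
                    refine Finset.sum_congr rfl fun i _ => ?_
                    rw [hsnoc ω' i]
                _ ≤ _ := h1
          _ ≤ ((m:ℝ) - σ / (σ + 1)) ^ (k+1)
                * (d y0 - dstar + 1 / 2 * (infDist y0 Ystar) ^ 2) := by
              rw [← Finset.mul_sum, pow_succ, mul_comm (((m:ℝ) - σ / (σ + 1)) ^ k), mul_assoc]
              exact mul_le_mul_of_nonneg_left ihsum hfac
  -- conclusion
  intro k
  obtain ⟨hmono_k, hsum_k⟩ := key k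
  have hd_le : ∑ ω : Fin k → Fin m, (d (Y k ω) - dstar)
      ≤ ((m:ℝ) - σ / (σ + 1)) ^ k * (d y0 - dstar + 1 / 2 * (infDist y0 Ystar) ^ 2) := by
    refine le_trans (Finset.sum_le_sum fun ω _ => ?_) hsum_k
    have := sq_nonneg (infDist (Y k ω) Ystar)
    linarith
  rw [div_le_iff₀ (by positivity)]
  have e : (1 - σ / (m * (σ + 1))) ^ k * (d y0 - dstar + (1 / 2) * (infDist y0 Ystar) ^ 2)
      * (m:ℝ) ^ k
      = ((m:ℝ) - σ / (σ + 1)) ^ k * (d y0 - dstar + 1 / 2 * (infDist y0 Ystar) ^ 2) := by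
    rw [mul_right_comm, ← mul_pow]
    congr 2
    field_simp
  rw [e]
  exact hd_le
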